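/- Let S be a set of Hermitian polynomials in ℂ[x,x̄] such that R − ∑_{i=1}^n x_i x̄_i ∈ 𝓜(S)_2 for some real R > 0. For each t ∈ ℕ let L_t : ℂ[x,x̄]_{2t} → ℂ be a linear functional that is nonnegative on 𝓜(S)_{2t}. Then: (1) for every monomial w in the variables x, x̄ of degree at most 2t one has |L_t(w)| ≤ R^{deg(w)/2} · L_t(1); (2) if sup_{t∈ℕ} L_t(1) < ∞, then there exist a linear functional L : ℂ[x,x̄] → ℂ and a strictly increasing map φ : ℕ → ℕ such that for every polynomial p ∈ ℂ[x,x̄], L_{φ(k)}(p) → L(p) as k → ∞ (where L_{φ(k)}(p) is defined for all k with 2φ(k) ≥ deg(p)). -/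

import Mathlib

open MvPolynomial ComplexOrder

/-- The conjugate polynomial: conjugate all coefficients and exchange each
variable `x_i` (encoded `Sum.inl i`) with `x̄_i` (encoded `Sum.inr i`). -/
noncomputable def cconj {n : ℕ} (p : MvPolynomial (Fin n ⊕ Fin n) ℂ) :
    MvPolynomial (Fin n ⊕ Fin n) ℂ :=
  rename (Sum.elim Sum.inr Sum.inl) (map (starRingEnd ℂ) p)

variable {n : ℕ}

lemma swap_swap : (Sum.elim Sum.inr Sum.inl : Fin n ⊕ Fin n → Fin n ⊕ Fin n) ∘ (Sum.elim Sum.inr Sum.inl) = id := by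
  funext j; cases j <;> rfl

lemma cconj_mul (p q : MvPolynomial (Fin n ⊕ Fin n) ℂ) : cconj (p * q) = cconj p * cconj q := by
  simp [cconj]

lemma cconj_add (p q : MvPolynomial (Fin n ⊕ Fin n) ℂ) : cconj (p + q) = cconj p + cconj q := by
  simp [cconj]

lemma cconj_sub (p q : MvPolynomial (Fin n ⊕ Fin n) ℂ) : cconj (p - q) = cconj p - cconj q := by
  simp [cconj]

lemma cconj_one : cconj (1 : MvPolynomial (Fin n ⊕ Fin n) ℂ) = 1 := by simp [cconj]

lemma cconj_C (c : ℂ) : cconj (C c : MvPolynomial (Fin n ⊕ Fin n) ℂ) = C ((starRingEnd ℂ) c) := by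
  simp [cconj]

lemma cconj_monomial (m : (Fin n ⊕ Fin n) →₀ ℕ) (c : ℂ) :
    cconj (monomial m c) = monomial (Finsupp.mapDomain (Sum.elim Sum.inr Sum.inl) m) ((starRingEnd ℂ) c) := by
  simp [cconj, map_monomial, rename_monomial]

lemma cconj_X (j : Fin n ⊕ Fin n) :
    cconj (X j : MvPolynomial (Fin n ⊕ Fin n) ℂ) = X (Sum.elim Sum.inr Sum.inl j) := by
  simp [cconj]

lemma cconj_cconj (p : MvPolynomial (Fin n ⊕ Fin n) ℂ) : cconj (cconj p) = p := by
  simp only [cconj, map_rename, rename_rename, swap_swap, rename_id]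
  rw [map_map]
  have : (starRingEnd ℂ).comp (starRingEnd ℂ) = RingHom.id ℂ := RingHom.ext fun z => Complex.conj_conj z
  rw [this, map_id, AlgHom.id_apply]

lemma totalDegree_cconj (p : MvPolynomial (Fin n ⊕ Fin n) ℂ) :
    (cconj p).totalDegree = p.totalDegree := by
  have key : ∀ q : MvPolynomial (Fin n ⊕ Fin n) ℂ, (cconj q).totalDegree ≤ q.totalDegree := by
    intro q
    refine (totalDegree_rename_le _ _).trans ?_
    exact Finset.sup_mono (support_map_subset _ _)
  refine le_antisymm (key p) ?_
  conv_lhs => rw [← cconj_cconj p]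
  exact key _


/-- The truncated quadratic module `𝓜(S)_{2t}`: nonnegative combinations of
products `g·p·p̄` with `g ∈ S ∪ {1}` and `deg(g p p̄) ≤ 2t`. -/
def QMt {n : ℕ} (S : Set (MvPolynomial (Fin n ⊕ Fin n) ℂ)) (t : ℕ) :
    Set (MvPolynomial (Fin n ⊕ Fin n) ℂ) :=
  { q | ∃ (N : ℕ) (c : Fin N → ℝ) (g p : Fin N → MvPolynomial (Fin n ⊕ Fin n) ℂ),
      (∀ s, 0 ≤ c s) ∧ (∀ s, g s ∈ S ∪ {1}) ∧
      (∀ s, (g s * (p s * cconj (p s))).totalDegree ≤ 2 * t) ∧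
      q = ∑ s, C (c s : ℂ) * (g s * (p s * cconj (p s))) }

lemma sq_mem {S : Set (MvPolynomial (Fin n ⊕ Fin n) ℂ)} {t : ℕ}
    {p : MvPolynomial (Fin n ⊕ Fin n) ℂ} (hp : p.totalDegree ≤ t) :
    p * cconj p ∈ QMt S t := by
  refine ⟨1, fun _ => 1, fun _ => 1, fun _ => p, fun _ => zero_le_one, fun _ => Or.inr rfl, ?_, ?_⟩
  · intro s
    rw [one_mul]
    calc (p * cconj p).totalDegree ≤ p.totalDegree + (cconj p).totalDegree := totalDegree_mul _ _
    _ ≤ 2 * t := by rw [totalDegree_cconj]; omega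
  · simp

lemma arch_mem {S : Set (MvPolynomial (Fin n ⊕ Fin n) ℂ)} {t : ℕ} {R : ℝ}
    (hArch : ((C (R : ℂ) : MvPolynomial (Fin n ⊕ Fin n) ℂ)
        - ∑ i : Fin n, X (Sum.inl i) * X (Sum.inr i)) ∈ QMt S 1)
    {p : MvPolynomial (Fin n ⊕ Fin n) ℂ} (hp : p.totalDegree + 1 ≤ t) :
    ((C (R : ℂ) - ∑ i : Fin n, X (Sum.inl i) * X (Sum.inr i)) * (p * cconj p)) ∈ QMt S t := by
  obtain ⟨N, c, g, q, hc, hg, hdeg, heq⟩ := hArch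
  refine ⟨N, c, g, fun s => q s * p, hc, hg, ?_, ?_⟩
  · intro s
    have h1 : (g s * (q s * p * cconj (q s * p))) =
        (g s * (q s * cconj (q s))) * (p * cconj p) := by
      rw [cconj_mul]; ring
    rw [h1]
    calc ((g s * (q s * cconj (q s))) * (p * cconj p)).totalDegree
        ≤ (g s * (q s * cconj (q s))).totalDegree + (p * cconj p).totalDegree :=
          totalDegree_mul _ _
      _ ≤ 2 * 1 + (p.totalDegree + (cconj p).totalDegree) :=
          add_le_add (hdeg s) (totalDegree_mul _ _)
      _ ≤ 2 * t := by rw [totalDegree_cconj]; omega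
  · rw [heq, Finset.sum_mul]
    refine Finset.sum_congr rfl fun s _ => ?_
    rw [cconj_mul]; ring

section Pos
variable {S : Set (MvPolynomial (Fin n ⊕ Fin n) ℂ)} {t : ℕ}
  {L : MvPolynomial (Fin n ⊕ Fin n) ℂ →ₗ[ℂ] ℂ}
  (hpos : ∀ q ∈ QMt S t, 0 ≤ L q)

include hpos

lemma L_sq_nonneg {p : MvPolynomial (Fin n ⊕ Fin n) ℂ} (hp : p.totalDegree ≤ t) :
    0 ≤ L (p * cconj p) := hpos _ (sq_mem hp)

lemma L_herm {p q : MvPolynomial (Fin n ⊕ Fin n) ℂ}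
    (hp : p.totalDegree ≤ t) (hq : q.totalDegree ≤ t) :
    L (q * cconj p) = (starRingEnd ℂ) (L (p * cconj q)) := by
  have hA := L_sq_nonneg hpos hp
  have hB := L_sq_nonneg hpos hq
  have hpq : (p + q).totalDegree ≤ t := (totalDegree_add _ _).trans (max_le hp hq)
  have hq' : ((C Complex.I : MvPolynomial (Fin n ⊕ Fin n) ℂ) * q).totalDegree ≤ t := by
    refine (totalDegree_mul _ _).trans ?_
    simpa [totalDegree_C] using hq
  have h1 := hpos _ (sq_mem (S := S) hpq)
  have h2 := hpos _ (sq_mem (S := S) ((totalDegree_add _ _).trans (max_le hp hq')))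
  have e1 : (p + q) * cconj (p + q) =
      p * cconj p + q * cconj q + (p * cconj q + q * cconj p) := by
    rw [cconj_add]; ring
  have e2 : (p + C Complex.I * q) * cconj (p + C Complex.I * q) =
      p * cconj p + q * cconj q + (- (C Complex.I) * (p * cconj q) + C Complex.I * (q * cconj p)) := by
    rw [cconj_add, cconj_mul, cconj_C]
    simp only [Complex.conj_I, map_neg]
    have hII : (C Complex.I : MvPolynomial (Fin n ⊕ Fin n) ℂ) * C Complex.I = -1 := by
      rw [← C_mul, Complex.I_mul_I, map_neg, map_one]
    linear_combination (-(q * cconj q)) * hII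
  rw [e1] at h1
  rw [e2] at h2
  have hL1 : 0 ≤ L (p * cconj p) + L (q * cconj q) + (L (p * cconj q) + L (q * cconj p)) := by
    simpa [map_add] using h1
  have hL2 : 0 ≤ L (p * cconj p) + L (q * cconj q) +
      (- Complex.I * L (p * cconj q) + Complex.I * L (q * cconj p)) := by
    have hc1 : (C Complex.I : MvPolynomial (Fin n ⊕ Fin n) ℂ) * (q * cconj p) = Complex.I • (q * cconj p) := by
      rw [smul_eq_C_mul]
    have hc2 : (-C Complex.I : MvPolynomial (Fin n ⊕ Fin n) ℂ) * (p * cconj q) = (-Complex.I) • (p * cconj q) := by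
      rw [smul_eq_C_mul, map_neg]
    rw [hc1, hc2] at h2
    simpa [map_add, map_smul, smul_eq_mul] using h2
  set A := L (p * cconj p)
  set B := L (q * cconj q)
  set u := L (p * cconj q)
  set v := L (q * cconj p)
  rw [Complex.nonneg_iff] at hA hB hL1 hL2
  have e3 := hL1.2
  have e4 := hL2.2
  simp only [Complex.add_im, Complex.mul_im, Complex.neg_re, Complex.neg_im,
    Complex.I_re, Complex.I_im, zero_mul, one_mul, neg_zero, zero_add, neg_mul, neg_neg] at e3 e4
  apply Complex.ext <;> simp only [Complex.conj_re, Complex.conj_im] <;>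
    linarith [hA.2, hB.2]

lemma L_cs {p q : MvPolynomial (Fin n ⊕ Fin n) ℂ}
    (hp : p.totalDegree ≤ t) (hq : q.totalDegree ≤ t) :
    ‖L (p * cconj q)‖^2 ≤ (L (p * cconj p)).re * (L (q * cconj q)).re := by
  set u := L (p * cconj q) with hu
  set A := (L (p * cconj p)).re with hA'
  set B := (L (q * cconj q)).re with hB'
  have hA0 : 0 ≤ A := (Complex.nonneg_iff.mp (L_sq_nonneg hpos hp)).1
  have hB0 : 0 ≤ B := (Complex.nonneg_iff.mp (L_sq_nonneg hpos hq)).1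
  have key : ∀ s : ℝ, 0 ≤ (Complex.normSq u * A) * (s * s) + (-(2 * Complex.normSq u)) * s + B := by
    intro s
    set M := C ((s:ℂ) * (starRingEnd ℂ) u) * p - q with hM
    have hdM : M.totalDegree ≤ t := by
      refine (totalDegree_sub _ _).trans (max_le ?_ hq)
      refine (totalDegree_mul _ _).trans ?_
      rw [totalDegree_C, zero_add]
      exact hp
    have hMM := L_sq_nonneg hpos hdM
    have e : M * cconj M = (((s:ℂ) * (starRingEnd ℂ) u) * ((s:ℂ) * u)) • (p * cconj p)
        - ((s:ℂ) * (starRingEnd ℂ) u) • (p * cconj q) - ((s:ℂ) * u) • (q * cconj p)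
        + q * cconj q := by
      rw [hM, cconj_sub, cconj_mul, cconj_C]
      simp only [map_mul, Complex.conj_conj, Complex.conj_ofReal, smul_eq_C_mul, map_mul]
      ring
    have hv : L (q * cconj p) = (starRingEnd ℂ) u := L_herm hpos hp hq
    have hLM : L (M * cconj M) = (((s:ℂ) * (starRingEnd ℂ) u) * ((s:ℂ) * u)) * L (p * cconj p)
        - ((s:ℂ) * (starRingEnd ℂ) u) * u - ((s:ℂ) * u) * ((starRingEnd ℂ) u)
        + L (q * cconj q) := by
      rw [e]
      simp only [map_add, map_sub, map_smul, smul_eq_mul, hv, ← hu]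
    rw [hLM] at hMM
    have := (Complex.nonneg_iff.mp hMM).1
    have hre : ((((s:ℂ) * (starRingEnd ℂ) u) * ((s:ℂ) * u)) * L (p * cconj p)
        - ((s:ℂ) * (starRingEnd ℂ) u) * u - ((s:ℂ) * u) * ((starRingEnd ℂ) u)
        + L (q * cconj q)).re
        = (Complex.normSq u * A) * (s * s) + (-(2 * Complex.normSq u)) * s + B := by
      have hmc := Complex.mul_conj u
      have h1 : ((s:ℂ) * (starRingEnd ℂ) u) * ((s:ℂ) * u) = ((s * s * Complex.normSq u : ℝ) : ℂ) := by
        push_cast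
        linear_combination ((s:ℂ) * (s:ℂ)) * hmc
      have h2 : ((s:ℂ) * (starRingEnd ℂ) u) * u = ((s * Complex.normSq u : ℝ) : ℂ) := by
        push_cast
        linear_combination (s:ℂ) * hmc
      have h3 : ((s:ℂ) * u) * ((starRingEnd ℂ) u) = ((s * Complex.normSq u : ℝ) : ℂ) := by
        push_cast
        linear_combination (s:ℂ) * hmc
      rw [h1, h2, h3]
      simp only [Complex.add_re, Complex.sub_re, Complex.ofReal_re, Complex.re_ofReal_mul]
      ring
    rw [hre] at this
    exact this
  have hd := discrim_le_zero key
  rw [discrim] at hd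
  have habs : ‖u‖^2 = Complex.normSq u := Complex.sq_norm u
  rcases eq_or_lt_of_le (Complex.normSq_nonneg u) with h0 | h0
  · rw [habs, ← h0]
    exact mul_nonneg hA0 hB0
  · rw [habs]
    nlinarith [hd, h0]
end Pos

section Arch
variable {S : Set (MvPolynomial (Fin n ⊕ Fin n) ℂ)} {t : ℕ} {R : ℝ}
  {L : MvPolynomial (Fin n ⊕ Fin n) ℂ →ₗ[ℂ] ℂ}
  (hpos : ∀ q ∈ QMt S t, 0 ≤ L q)
  (hArch : ((C (R : ℂ) : MvPolynomial (Fin n ⊕ Fin n) ℂ)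
      - ∑ i : Fin n, X (Sum.inl i) * X (Sum.inr i)) ∈ QMt S 1)

include hpos hArch

lemma arch_step {p : MvPolynomial (Fin n ⊕ Fin n) ℂ} (hp : p.totalDegree + 1 ≤ t)
    (j : Fin n ⊕ Fin n) :
    (L ((X j * p) * cconj (X j * p))).re ≤ R * (L (p * cconj p)).re := by
  have hmem := hpos _ (arch_mem hArch hp)
  -- rewrite the big product
  have key : (C (R : ℂ) - ∑ i : Fin n, X (Sum.inl i) * X (Sum.inr i)) * (p * cconj p)
      = C (R : ℂ) * (p * cconj p)
        - ∑ i : Fin n, (X (Sum.inl i) * p) * cconj (X (Sum.inl i) * p) := by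
    rw [sub_mul, Finset.sum_mul]
    congr 1
    refine Finset.sum_congr rfl fun i _ => ?_
    rw [cconj_mul, cconj_X]
    simp only [Sum.elim_inl]
    ring
  rw [key] at hmem
  have hsum : 0 ≤ (R * (L (p * cconj p)).re)
      - ∑ i : Fin n, (L ((X (Sum.inl i) * p) * cconj (X (Sum.inl i) * p))).re := by
    have hL : L (C (R:ℂ) * (p * cconj p)
        - ∑ i : Fin n, (X (Sum.inl i) * p) * cconj (X (Sum.inl i) * p))
        = (R:ℂ) * L (p * cconj p)
          - ∑ i : Fin n, L ((X (Sum.inl i) * p) * cconj (X (Sum.inl i) * p)) := by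
      rw [map_sub, map_sum, ← smul_eq_C_mul, map_smul, smul_eq_mul]
    rw [hL] at hmem
    have := (Complex.nonneg_iff.mp hmem).1
    simpa [Complex.sub_re, Complex.re_ofReal_mul, Complex.re_sum] using this
  have hdX : ∀ j' : Fin n ⊕ Fin n, (X j' * p).totalDegree ≤ t := by
    intro j'
    refine (totalDegree_mul _ _).trans ?_
    rw [totalDegree_X]
    omega
  have hterm : ∀ i : Fin n,
      0 ≤ (L ((X (Sum.inl i) * p) * cconj (X (Sum.inl i) * p))).re := fun i =>
    (Complex.nonneg_iff.mp (L_sq_nonneg hpos (hdX _))).1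
  -- the product for j=inr i equals the one for inl i
  have hjj : ∀ i : Fin n, (X (Sum.inr i) * p) * cconj (X (Sum.inr i) * p)
      = (X (Sum.inl i) * p) * cconj (X (Sum.inl i) * p) := by
    intro i
    rw [cconj_mul, cconj_mul, cconj_X, cconj_X]
    simp only [Sum.elim_inl, Sum.elim_inr]
    ring
  rcases j with i | i
  · have hle : (L ((X (Sum.inl i) * p) * cconj (X (Sum.inl i) * p))).re
        ≤ ∑ i' : Fin n, (L ((X (Sum.inl i') * p) * cconj (X (Sum.inl i') * p))).re :=
      Finset.single_le_sum (fun i' _ => hterm i') (Finset.mem_univ i)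
    linarith
  · rw [hjj i]
    have hle : (L ((X (Sum.inl i) * p) * cconj (X (Sum.inl i) * p))).re
        ≤ ∑ i' : Fin n, (L ((X (Sum.inl i') * p) * cconj (X (Sum.inl i') * p))).re :=
      Finset.single_le_sum (fun i' _ => hterm i') (Finset.mem_univ i)
    linarith

lemma mon_bound (hR : 0 ≤ R) :
    ∀ (k : ℕ) (w : (Fin n ⊕ Fin n) →₀ ℕ), (w.sum fun _ e => e) = k → k ≤ t →
    (L (monomial w 1 * cconj (monomial w 1))).re ≤ R ^ k * (L 1).re := by
  intro k
  induction k with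
  | zero =>
    intro w hw _
    have hw0 : w = 0 := by
      ext j
      by_contra hj
      have hmem : j ∈ w.support := Finsupp.mem_support_iff.mpr fun h => hj (by simp [h])
      have : 0 < w.sum fun _ e => e := by
        refine Finset.sum_pos' (fun _ _ => Nat.zero_le _) ⟨j, hmem, ?_⟩
        exact Nat.pos_of_ne_zero (Finsupp.mem_support_iff.mp hmem)
      omega
    subst hw0
    simp [monomial_zero', cconj_one, pow_zero, one_mul]
  | succ k ih =>
    intro w hw hk
    -- find j in the support
    have hne : w.support.Nonempty := by
      by_contra h
      rw [Finset.not_nonempty_iff_eq_empty] at h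
      have : w = 0 := Finsupp.support_eq_empty.mp h
      subst this
      simp [Finsupp.sum_zero_index] at hw
    obtain ⟨j, hj⟩ := hne
    set w' := w - Finsupp.single j 1 with hw'
    have hsle : Finsupp.single j 1 ≤ w := by
      rw [Finsupp.single_le_iff]
      exact Nat.one_le_iff_ne_zero.mpr (Finsupp.mem_support_iff.mp hj)
    have hww : w' + Finsupp.single j 1 = w := tsub_add_cancel_of_le hsle
    have hsum' : (w'.sum fun _ e => e) = k := by
      have : ((w' + Finsupp.single j 1).sum fun _ e => e) = w.sum fun _ e => e := by rw [hww]
      rw [Finsupp.sum_add_index' (fun _ => rfl) (fun _ _ _ => rfl)] at this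
      rw [Finsupp.sum_single_index rfl] at this
      omega
    have hmonmul : monomial w (1:ℂ) = X j * monomial w' 1 := by
      rw [X, monomial_mul, one_mul, ← hww, add_comm]
    have hdw' : (monomial w' (1:ℂ)).totalDegree + 1 ≤ t := by
      rw [totalDegree_monomial _ (one_ne_zero)]
      omega
    have := arch_step hpos hArch hdw' j
    have ihw := ih w' hsum' (by omega)
    rw [hmonmul]
    calc (L ((X j * monomial w' 1) * cconj (X j * monomial w' 1))).re
        ≤ R * (L (monomial w' 1 * cconj (monomial w' 1))).re := this
      _ ≤ R * (R ^ k * (L 1).re) := by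
          exact mul_le_mul_of_nonneg_left ihw hR
      _ = R ^ (k+1) * (L 1).re := by ring
end Arch

lemma finsupp_sum_le_of_le {w u : (Fin n ⊕ Fin n) →₀ ℕ} (h : u ≤ w) :
    (u.sum fun _ e => e) ≤ w.sum fun _ e => e := by
  have hww : (w - u) + u = w := tsub_add_cancel_of_le h
  have : (((w - u) + u).sum fun _ e => e) = w.sum fun _ e => e := by rw [hww]
  rw [Finsupp.sum_add_index' (fun _ => rfl) (fun _ _ _ => rfl)] at this
  omega

lemma finsupp_split (k : ℕ) : ∀ (w : (Fin n ⊕ Fin n) →₀ ℕ), k ≤ (w.sum fun _ e => e) →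
    ∃ u : (Fin n ⊕ Fin n) →₀ ℕ, u ≤ w ∧ (u.sum fun _ e => e) = k := by
  induction k with
  | zero => exact fun w _ => ⟨0, (zero_le : (0 : (Fin n ⊕ Fin n) →₀ ℕ) ≤ w), Finsupp.sum_zero_index⟩
  | succ k ih =>
    intro w hk
    obtain ⟨u, hu, hus⟩ := ih w (by omega)
    have hne : ∃ j, u j < w j := by
      by_contra h
      push_neg at h
      have : u = w := le_antisymm hu (Finsupp.le_def.mpr h)
      subst this
      omega
    obtain ⟨j, hjlt⟩ := hne
    refine ⟨u + Finsupp.single j 1, ?_, ?_⟩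
    · rw [Finsupp.le_def]
      intro a
      rcases eq_or_ne a j with rfl | hne'
      · simpa [Finsupp.single_eq_same] using hjlt
      · simp [Finsupp.single_eq_of_ne' (Ne.symm hne'), Finsupp.le_def.mp hu a]
    · rw [Finsupp.sum_add_index' (fun _ => rfl) (fun _ _ _ => rfl), hus,
        Finsupp.sum_single_index rfl]

lemma part1 {S : Set (MvPolynomial (Fin n ⊕ Fin n) ℂ)} {t : ℕ} {R : ℝ} (hR : 0 < R)
    {L : MvPolynomial (Fin n ⊕ Fin n) ℂ →ₗ[ℂ] ℂ}
    (hpos : ∀ q ∈ QMt S t, 0 ≤ L q)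
    (hArch : ((C (R : ℂ) : MvPolynomial (Fin n ⊕ Fin n) ℂ)
        - ∑ i : Fin n, X (Sum.inl i) * X (Sum.inr i)) ∈ QMt S 1)
    (w : (Fin n ⊕ Fin n) →₀ ℕ) (hw : (w.sum fun _ e => e) ≤ 2 * t) :
    ‖L (monomial w 1)‖ ≤
      R ^ (((w.sum fun _ e => e : ℕ) : ℝ) / 2) * (L 1).re := by
  set d := w.sum fun _ e => e with hd
  obtain ⟨u, hu, hus⟩ := finsupp_split (min t d) w (by omega)
  set v := w - u with hvdef
  have huv : u + v = w := by
    rw [hvdef, add_comm]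
    exact tsub_add_cancel_of_le hu
  have hvs : (v.sum fun _ e => e) = d - min t d := by
    have : ((u + v).sum fun _ e => e) = d := by rw [huv]
    rw [Finsupp.sum_add_index' (fun _ => rfl) (fun _ _ _ => rfl)] at this
    omega
  -- the two halves
  set sw : (Fin n ⊕ Fin n) → (Fin n ⊕ Fin n) := Sum.elim Sum.inr Sum.inl with hsw
  set p : MvPolynomial (Fin n ⊕ Fin n) ℂ := monomial u 1 with hp
  set q : MvPolynomial (Fin n ⊕ Fin n) ℂ := monomial (Finsupp.mapDomain sw v) 1 with hq
  have hcq : cconj q = monomial v 1 := by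
    rw [hq, cconj_monomial, map_one]
    congr 1
    rw [← Finsupp.mapDomain_comp, hsw, swap_swap, Finsupp.mapDomain_id]
  have hpq : p * cconj q = monomial w 1 := by
    rw [hcq, hp, monomial_mul, one_mul, huv]
  have hswsum : ((Finsupp.mapDomain sw v).sum fun _ e => e) = v.sum fun _ e => e :=
    Finsupp.sum_mapDomain_index (fun _ => rfl) (fun _ _ _ => rfl)
  have hdp : p.totalDegree ≤ t := by
    rw [hp, totalDegree_monomial _ one_ne_zero]
    omega
  have hdq : q.totalDegree ≤ t := by
    rw [hq, totalDegree_monomial _ one_ne_zero, hswsum]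
    omega
  have hcs := L_cs hpos hdp hdq
  have hb1 : (L (p * cconj p)).re ≤ R ^ (min t d) * (L 1).re := by
    exact mon_bound hpos hArch hR.le (min t d) u hus (by omega)
  have hb2 : (L (q * cconj q)).re ≤ R ^ (d - min t d) * (L 1).re := by
    refine mon_bound hpos hArch hR.le (d - min t d) (Finsupp.mapDomain sw v) ?_ (by omega)
    rw [hswsum, hvs]
  have hL1 : 0 ≤ (L 1).re := by
    have h1 : (1 : MvPolynomial (Fin n ⊕ Fin n) ℂ) * cconj 1 = 1 := by rw [cconj_one, one_mul]
    have := L_sq_nonneg hpos (t := t) (p := 1) (by simp [totalDegree_one])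
    rw [h1] at this
    exact (Complex.nonneg_iff.mp this).1
  have hA0 : 0 ≤ (L (p * cconj p)).re := (Complex.nonneg_iff.mp (L_sq_nonneg hpos hdp)).1
  have hB0 : 0 ≤ (L (q * cconj q)).re := (Complex.nonneg_iff.mp (L_sq_nonneg hpos hdq)).1
  rw [hpq] at hcs
  -- combine
  have hsq : ‖L (monomial w 1)‖^2 ≤ R ^ d * ((L 1).re)^2 := by
    calc ‖L (monomial w 1)‖^2
        ≤ (L (p * cconj p)).re * (L (q * cconj q)).re := hcs
      _ ≤ (R ^ (min t d) * (L 1).re) * (R ^ (d - min t d) * (L 1).re) := by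
          apply mul_le_mul hb1 hb2 hB0
          positivity
      _ = R ^ d * ((L 1).re)^2 := by
          have : R ^ (min t d) * R ^ (d - min t d) = R ^ d := by
            rw [← pow_add]
            congr 1
            omega
          calc R ^ (min t d) * (L 1).re * (R ^ (d - min t d) * (L 1).re)
              = (R ^ (min t d) * R ^ (d - min t d)) * ((L 1).re)^2 := by ring
            _ = R ^ d * ((L 1).re)^2 := by rw [this]
  have hrpow : R ^ ((d : ℝ) / 2) = Real.sqrt (R ^ d) := by
    rw [Real.sqrt_eq_rpow, ← Real.rpow_natCast R d, ← Real.rpow_mul hR.le]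
    congr 1
    ring
  rw [hrpow]
  have hrhs : Real.sqrt (R ^ d) * (L 1).re = Real.sqrt (R ^ d * ((L 1).re)^2) := by
    rw [Real.sqrt_mul (by positivity), Real.sqrt_sq hL1]
  rw [hrhs]
  rw [show ‖L (monomial w 1)‖ = Real.sqrt (‖L (monomial w 1)‖^2) from
    (Real.sqrt_sq (norm_nonneg _)).symm]
  exact Real.sqrt_le_sqrt hsq

noncomputable def Ll {n : ℕ} (a : ((Fin n ⊕ Fin n) →₀ ℕ) → ℂ) :
    MvPolynomial (Fin n ⊕ Fin n) ℂ →ₗ[ℂ] ℂ :=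
  (Finsupp.linearCombination ℂ a).comp (basisMonomials (Fin n ⊕ Fin n) ℂ).repr.toLinearMap

lemma Ll_apply {n : ℕ} (a : ((Fin n ⊕ Fin n) →₀ ℕ) → ℂ) (p : MvPolynomial (Fin n ⊕ Fin n) ℂ) :
    Ll a p = ∑ w ∈ p.support, coeff w p * a w := by
  have h := Finsupp.linearCombination_apply (R := ℂ) (v := a)
      ((basisMonomials (Fin n ⊕ Fin n) ℂ).repr p)
  refine Eq.trans h ?_
  rfl

theorem stmt2' {n : ℕ} (S : Set (MvPolynomial (Fin n ⊕ Fin n) ℂ))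
    (R : ℝ) (hR : 0 < R)
    (hArch : ((C (R : ℂ) : MvPolynomial (Fin n ⊕ Fin n) ℂ)
        - ∑ i : Fin n, X (Sum.inl i) * X (Sum.inr i)) ∈ QMt S 1)
    (L : ℕ → (MvPolynomial (Fin n ⊕ Fin n) ℂ →ₗ[ℂ] ℂ))
    (hLpos : ∀ t : ℕ, ∀ q ∈ QMt S t, 0 ≤ (L t) q) :
    (∀ t : ℕ, ∀ w : (Fin n ⊕ Fin n) →₀ ℕ, (w.sum fun _ e => e) ≤ 2 * t →
        ‖(L t) (monomial w 1)‖ ≤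
          R ^ (((w.sum fun _ e => e : ℕ) : ℝ) / 2) * ((L t) 1).re) ∧
    ((∃ Cbd : ℝ, ∀ t : ℕ, ((L t) 1).re ≤ Cbd) →
      ∃ (Llim : MvPolynomial (Fin n ⊕ Fin n) ℂ →ₗ[ℂ] ℂ) (φ : ℕ → ℕ),
        StrictMono φ ∧
        ∀ p : MvPolynomial (Fin n ⊕ Fin n) ℂ,
          Filter.Tendsto (fun k => (L (φ k)) p) Filter.atTop (nhds (Llim p))) := by
  have hpart1 : ∀ t : ℕ, ∀ w : (Fin n ⊕ Fin n) →₀ ℕ, (w.sum fun _ e => e) ≤ 2 * t →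
      ‖(L t) (monomial w 1)‖ ≤
        R ^ (((w.sum fun _ e => e : ℕ) : ℝ) / 2) * ((L t) 1).re :=
    fun t w hw => part1 hR (hLpos t) hArch w hw
  refine ⟨hpart1, ?_⟩
  rintro ⟨Cbd, hCbd⟩
  set C0 : ℝ := max Cbd 0 with hC0
  set M : ((Fin n ⊕ Fin n) →₀ ℕ) → ℝ :=
    fun w => R ^ (((w.sum fun _ e => e : ℕ) : ℝ) / 2) * C0 with hM
  set x : ℕ → ((Fin n ⊕ Fin n) →₀ ℕ) → ℂ :=
    fun t w => if (w.sum fun _ e => e) ≤ 2*t then L t (monomial w 1) else 0 with hx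
  have hxmem : ∀ t, x t ∈ Set.univ.pi (fun w => Metric.closedBall (0:ℂ) (M w)) := by
    intro t w _
    rw [Metric.mem_closedBall, Complex.dist_eq, sub_zero]
    have hMnn : (0:ℝ) ≤ M w := by
      rw [hM]
      exact mul_nonneg (Real.rpow_nonneg hR.le _) (le_max_right _ _)
    by_cases h : (w.sum fun _ e => e) ≤ 2*t
    · rw [hx]
      simp only [if_pos h]
      calc ‖L t (monomial w 1)‖
          ≤ R ^ (((w.sum fun _ e => e : ℕ) : ℝ) / 2) * ((L t) 1).re := hpart1 t w h
        _ ≤ M w := by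
            rw [hM]
            exact mul_le_mul_of_nonneg_left ((hCbd t).trans (le_max_left _ _))
              (Real.rpow_nonneg hR.le _)
    · rw [hx]
      simp only [if_neg h]
      simpa using hMnn
  obtain ⟨a, -, φ, hφ, hconv⟩ :=
    (isCompact_univ_pi fun w => isCompact_closedBall (0:ℂ) (M w)).tendsto_subseq hxmem
  refine ⟨Ll a, φ, hφ, ?_⟩
  intro p
  have hLl := Ll_apply a p
  have hLt : ∀ t, L t p = ∑ w ∈ p.support, coeff w p * (L t (monomial w 1)) := by
    intro t
    conv_lhs => rw [as_sum p]
    rw [map_sum]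
    refine Finset.sum_congr rfl fun w hw => ?_
    have : monomial w (coeff w p) = (coeff w p) • monomial w (1:ℂ) := by
      rw [smul_monomial, smul_eq_mul, mul_one]
    rw [this, map_smul, smul_eq_mul]
  rw [hLl]
  simp only [hLt]
  apply tendsto_finset_sum
  intro w hw
  apply Filter.Tendsto.const_mul
  have h1 : Filter.Tendsto (fun k => x (φ k) w) Filter.atTop (nhds (a w)) := by
    exact tendsto_pi_nhds.mp hconv w
  refine Filter.Tendsto.congr' ?_ h1
  filter_upwards [Filter.eventually_ge_atTop (w.sum fun _ e => e)] with k hk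
  have h2 : (w.sum fun _ e => e) ≤ 2 * φ k := by
    have : k ≤ φ k := hφ.le_apply
    omega
  rw [hx]
  simp only [if_pos h2]

/-- if `R − ∑ x_i x̄_i ∈ 𝓜(S)_2` and each `L t` is nonnegative on
`𝓜(S)_{2t}`, then (1) `|L t (w)| ≤ R^{deg(w)/2} · (L t 1)` for every monomial
`w` of degree at most `2t`; and (2) if `sup_t L t (1) < ∞` then some
subsequence of `(L t)_t` converges pointwise to a linear functional `L`. -/
theorem stmt2 {n : ℕ} (S : Set (MvPolynomial (Fin n ⊕ Fin n) ℂ))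
    (hS : ∀ g ∈ S, cconj g = g)
    (R : ℝ) (hR : 0 < R)
    (hArch : ((C (R : ℂ) : MvPolynomial (Fin n ⊕ Fin n) ℂ)
        - ∑ i : Fin n, X (Sum.inl i) * X (Sum.inr i)) ∈ QMt S 1)
    (L : ℕ → (MvPolynomial (Fin n ⊕ Fin n) ℂ →ₗ[ℂ] ℂ))
    (hLpos : ∀ t : ℕ, ∀ q ∈ QMt S t, 0 ≤ (L t) q) :
    (∀ t : ℕ, ∀ w : (Fin n ⊕ Fin n) →₀ ℕ, (w.sum fun _ e => e) ≤ 2 * t →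
        ‖(L t) (monomial w 1)‖ ≤
          R ^ (((w.sum fun _ e => e : ℕ) : ℝ) / 2) * ((L t) 1).re) ∧
    ((∃ Cbd : ℝ, ∀ t : ℕ, ((L t) 1).re ≤ Cbd) →
      ∃ (Llim : MvPolynomial (Fin n ⊕ Fin n) ℂ →ₗ[ℂ] ℂ) (φ : ℕ → ℕ),
        StrictMono φ ∧
        ∀ p : MvPolynomial (Fin n ⊕ Fin n) ℂ,
          Filter.Tendsto (fun k => (L (φ k)) p) Filter.atTop (nhds (Llim p))) :=
  stmt2' S R hR hArch L hLpos
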